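/- Every separable Banach space B embeds as a dense subspace of a separable Hilbert space H via a continuous linear injection (Kuelbs embedding): there exist a separable Hilbert space H and a continuous injective linear map j : B → H with norm at most 1 and dense range. -/

import Mathlib

open TopologicalSpace
open scoped ENNReal

/-- Kuelbs embedding: every separable real Banach space embeds as a dense subspace of a
separable Hilbert space via a continuous injective linear map of norm at most one. -/
theorem stmt2 (B : Type*) [NormedAddCommGroup B] [NormedSpace ℝ B] [CompleteSpace B]
    [SeparableSpace B] :
    ∃ (H : Type) (_ : NormedAddCommGroup H) (_ : InnerProductSpace ℝ H),
      CompleteSpace H ∧ SeparableSpace H ∧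
      ∃ j : B →L[ℝ] H, Function.Injective j ∧ ‖j‖ ≤ 1 ∧ DenseRange j := by
  classical
  have : Nonempty B := ⟨0⟩
  set u : ℕ → B := denseSeq B with hu
  -- dual functionals
  have hf : ∀ n, ∃ g : B →L[ℝ] ℝ, ‖g‖ ≤ 1 ∧ g (u n) = ‖u n‖ := fun n =>
    exists_dual_vector'' ℝ (u n)
  choose f hf1 hf2 using hf
  set c : ℕ → ℝ := fun n => (1 / 2 : ℝ) ^ (n + 1) with hc
  have hcpos : ∀ n, 0 < c n := fun n => by positivity
  -- summability of weights squared
  have hcs : Summable fun n => (c n) ^ 2 := by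
    have : (fun n : ℕ => (c n) ^ 2) = fun n => (1 / 4 : ℝ) ^ (n + 1) := by
      funext n
      simp only [hc]
      rw [← pow_mul, pow_mul']
      norm_num
    rw [this]
    exact (summable_geometric_of_lt_one (by norm_num) (by norm_num)).comp_injective
      (add_left_injective 1)
  have hcsum_le : (∑' n, (c n) ^ 2) ≤ 1 := by
    have h4 : (∑' n : ℕ, (1 / 4 : ℝ) ^ n) = 4 / 3 := by
      rw [tsum_geometric_of_lt_one (by norm_num) (by norm_num)]; norm_num
    have : (fun n : ℕ => (c n) ^ 2) = fun n => (1 / 4 : ℝ) * (1 / 4 : ℝ) ^ n := by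
      funext n
      simp only [hc]
      rw [← pow_mul, pow_mul']
      ring
    rw [this, tsum_mul_left, h4]
    norm_num
  -- pointwise bound
  have hb : ∀ (x : B) (n : ℕ), ‖c n * f n x‖ ^ 2 ≤ (c n) ^ 2 * ‖x‖ ^ 2 := by
    intro x n
    have h1 : ‖f n x‖ ≤ ‖x‖ := by
      calc ‖f n x‖ ≤ ‖f n‖ * ‖x‖ := (f n).le_opNorm x
        _ ≤ 1 * ‖x‖ := by gcongr; exact hf1 n
        _ = ‖x‖ := one_mul _
    rw [norm_mul, mul_pow, Real.norm_eq_abs (c n), sq_abs]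
    have h2 : ‖f n x‖ ^ 2 ≤ ‖x‖ ^ 2 := pow_le_pow_left₀ (norm_nonneg _) h1 2
    have := sq_nonneg (c n)
    nlinarith
  have hsum : ∀ x : B, Summable fun n => ‖c n * f n x‖ ^ 2 := fun x =>
    Summable.of_nonneg_of_le (fun n => by positivity) (hb x) (hcs.mul_right _)
  have hmem : ∀ x : B, Memℓp (fun n => c n * f n x) 2 := by
    intro x
    apply memℓp_gen
    simpa using hsum x
  -- the linear map into ℓ²
  set F : B →ₗ[ℝ] lp (fun _ : ℕ => ℝ) 2 :=
    { toFun := fun x => ⟨fun n => c n * f n x, hmem x⟩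
      map_add' := fun x y => by
        ext n
        simp [mul_add]; rfl
      map_smul' := fun r x => by
        ext n
        simp [mul_comm, mul_left_comm] } with hF
  have hbound : ∀ x : B, ‖F x‖ ≤ 1 * ‖x‖ := by
    intro x
    rw [one_mul]
    apply lp.norm_le_of_tsum_le (p := 2) (by norm_num) (norm_nonneg x)
    have : (2 : ℝ≥0∞).toReal = (2 : ℝ) := by norm_num
    rw [this]
    calc (∑' n, ‖c n * f n x‖ ^ (2 : ℝ))
        = ∑' n, ‖c n * f n x‖ ^ (2 : ℕ) := by
          congr 1; funext n; rw [← Real.rpow_natCast]; norm_num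
      _ ≤ ∑' n, (c n) ^ 2 * ‖x‖ ^ 2 := Summable.tsum_le_tsum (hb x) (hsum x) (hcs.mul_right _)
      _ = (∑' n, (c n) ^ 2) * ‖x‖ ^ 2 := tsum_mul_right
      _ ≤ 1 * ‖x‖ ^ 2 := mul_le_mul_of_nonneg_right hcsum_le (by positivity)
      _ = ‖x‖ ^ (2 : ℝ) := by rw [one_mul, ← Real.rpow_natCast]; norm_num
  set T : B →L[ℝ] lp (fun _ : ℕ => ℝ) 2 := F.mkContinuous 1 hbound with hT
  -- injectivity
  have hinj : Function.Injective T := by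
    rw [injective_iff_map_eq_zero]
    intro x hx
    by_contra hx0
    have hfx : ∀ n, f n x = 0 := by
      intro n
      have : (T x : ∀ n, ℝ) n = 0 := by rw [hx]; rfl
      have hcn := (hcpos n).ne'
      change c n * f n x = 0 at this
      rcases mul_eq_zero.mp this with h | h
      · exact absurd h hcn
      · exact h
    have hpos : 0 < ‖x‖ / 2 := by
      have := norm_pos_iff.mpr hx0; linarith
    obtain ⟨n, hn⟩ := Metric.denseRange_iff.mp (denseRange_denseSeq B) x (‖x‖ / 2) hpos
    rw [dist_comm, dist_eq_norm] at hn
    have h1 : ‖u n‖ > ‖x‖ / 2 := by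
      have := norm_sub_norm_le (u n) x
      have h2 := abs_le.mp (abs_norm_sub_norm_le (u n) x)
      linarith [h2.1]
    have h2 : ‖u n‖ ≤ ‖u n - x‖ := by
      have : f n (u n) = f n (u n - x) := by
        rw [map_sub, hfx n, sub_zero]
      calc ‖u n‖ = f n (u n) := (hf2 n).symm
        _ = f n (u n - x) := this
        _ ≤ ‖f n (u n - x)‖ := le_abs_self _
        _ ≤ ‖f n‖ * ‖u n - x‖ := (f n).le_opNorm _
        _ ≤ 1 * ‖u n - x‖ := by gcongr; exact hf1 n
        _ = ‖u n - x‖ := one_mul _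
    linarith
  -- the closure of the range
  set K : Submodule ℝ (lp (fun _ : ℕ => ℝ) 2) :=
    (LinearMap.range (T : B →ₗ[ℝ] lp (fun _ : ℕ => ℝ) 2)).topologicalClosure with hK
  have hTK : ∀ x : B, T x ∈ K :=
    fun x => Submodule.le_topologicalClosure _ ⟨x, rfl⟩
  set j : B →L[ℝ] K := T.codRestrict K hTK with hj
  have hjdense : DenseRange j := by
    intro y
    rw [closure_subtype]
    have : (Subtype.val : K → lp (fun _ : ℕ => ℝ) 2) '' Set.range j =
        (LinearMap.range (T : B →ₗ[ℝ] lp (fun _ : ℕ => ℝ) 2) : Set (lp (fun _ : ℕ => ℝ) 2)) := by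
      ext z
      constructor
      · rintro ⟨w, ⟨x, rfl⟩, rfl⟩
        exact ⟨x, rfl⟩
      · rintro ⟨x, rfl⟩
        exact ⟨j x, ⟨x, rfl⟩, rfl⟩
    rw [this, ← Submodule.topologicalClosure_coe]
    exact y.2
  refine ⟨K, inferInstance, inferInstance, ?_, ?_, j, ?_, ?_, hjdense⟩
  · exact (Submodule.isClosed_topologicalClosure _).completeSpace_coe
  · exact hjdense.separableSpace j.continuous
  · intro a b hab
    apply hinj
    exact congrArg Subtype.val hab
  · apply ContinuousLinearMap.opNorm_le_bound _ zero_le_one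
    intro x
    have h1 : ‖j x‖ = ‖T x‖ := rfl
    have h2 : (T x : lp (fun _ : ℕ => ℝ) 2) = F x := rfl
    rw [h1, h2]
    exact hbound x
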